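/- Introductory surface count (n = 3): Let p be a prime and r = p^a, s = p^b with a, b ≥ 0 not both 0; put q := rs. Then for every positive integer ν, the number of pairs (L, M) of F_{q^ν}-subspaces of F_{q^ν}^3 with dim L = 1, dim M = 2, L^r ⊆ M and L ⊆ M^s is equal to q^{2ν} + (q^2 + q + 2)·q^ν + 1. -/

import Mathlib

set_option linter.unusedSectionVars false

open Submodule Module

/-- The `p^e`-th power ring homomorphism (iterated Frobenius) on a field of characteristic `p`. -/
noncomputable def frobHom (F : Type*) [Field F] (p : ℕ) [Fact p.Prime] [CharP F p] (e : ℕ) :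
    F →+* F where
  toFun x := x ^ p ^ e
  map_one' := one_pow _
  map_mul' x y := mul_pow x y _
  map_zero' := zero_pow (pow_ne_zero e (Fact.out : p.Prime).ne_zero)
  map_add' x y := add_pow_char_pow x y p e

instance (F : Type*) [Field F] [Finite F] (p : ℕ) [Fact p.Prime] [CharP F p] (e : ℕ) :
    RingHomSurjective (frobHom F p e) :=
  ⟨Finite.injective_iff_surjective.mp (frobHom F p e).injective⟩

/-- The coordinatewise `p^e`-th power map on `Fin n → F`, as a semilinear map over `frobHom`. -/
noncomputable def frobLin (F : Type*) [Field F] (p : ℕ) [Fact p.Prime] [CharP F p] (e n : ℕ) :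
    (Fin n → F) →ₛₗ[frobHom F p e] (Fin n → F) where
  toFun a := fun i => a i ^ p ^ e
  map_add' a b := funext fun i => add_pow_char_pow (a i) (b i) p e
  map_smul' c a := funext fun i => by
    simp [frobHom, mul_pow, Pi.smul_apply, smul_eq_mul]

/-- `L^q` for `q = p^e`: the image of the subspace `L ⊆ F^n` under the coordinatewise
`q`-th power (Frobenius) map; it is again an `F`-subspace. -/
noncomputable def frobSub (F : Type*) [Field F] [Finite F] (p : ℕ) [Fact p.Prime] [CharP F p]
    (e n : ℕ) (L : Submodule F (Fin n → F)) : Submodule F (Fin n → F) :=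
  L.map (frobLin F p e n)

/-! ### Generic counting helpers -/

/-- If all fibers of `π : T → X` have the same cardinality `k`, then `|T| = |X| * k`. -/
lemma fiber_count {T X : Type*} [Finite T] [Finite X] (π : T → X) (k : ℕ)
    (h : ∀ x : X, Nat.card {t : T // π t = x} = k) :
    Nat.card T = Nat.card X * k := by
  classical
  haveI := Fintype.ofFinite T
  haveI := Fintype.ofFinite X
  rw [← Nat.card_congr (Equiv.sigmaFiberEquiv π)]
  rw [Nat.card_eq_fintype_card, Fintype.card_sigma, Nat.card_eq_fintype_card]
  rw [Finset.sum_congr rfl fun x _ => show Fintype.card {t : T // π t = x} = k from by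
    rw [← Nat.card_eq_fintype_card]; exact h x]
  simp [Finset.sum_const, mul_comm]

/-- Euclid step: `gcd (x^(m t) - 1) (x^(m t + m) - 1) = x^m - 1`. -/
lemma gcd_pow_sub_one_aux (x m t : ℕ) (hx : 1 ≤ x) :
    Nat.gcd (x ^ (m * t) - 1) (x ^ (m * t + m) - 1) = x ^ m - 1 := by
  apply Nat.dvd_antisymm
  · set D := Nat.gcd (x ^ (m * t) - 1) (x ^ (m * t + m) - 1) with hD
    have h1 : (1 : ℕ) ≡ x ^ (m * t) [MOD D] :=
      (Nat.modEq_iff_dvd' (Nat.one_le_pow _ _ hx)).2 (Nat.gcd_dvd_left _ _)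
    have h2 : (1 : ℕ) ≡ x ^ (m * t + m) [MOD D] :=
      (Nat.modEq_iff_dvd' (Nat.one_le_pow _ _ hx)).2 (Nat.gcd_dvd_right _ _)
    have h3 : (1 * x ^ m : ℕ) ≡ x ^ (m * t) * x ^ m [MOD D] := h1.mul_right _
    rw [one_mul, ← pow_add] at h3
    have h4 : (1 : ℕ) ≡ x ^ m [MOD D] := h2.trans h3.symm
    exact (Nat.modEq_iff_dvd' (Nat.one_le_pow _ _ hx)).1 h4
  · refine Nat.dvd_gcd ?_ ?_
    · have := Nat.sub_dvd_pow_sub_pow (x ^ m) 1 t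
      simpa [← pow_mul, one_pow] using this
    · have := Nat.sub_dvd_pow_sub_pow (x ^ m) 1 (t + 1)
      rw [one_pow, ← pow_mul, mul_add, mul_one] at this
      exact this

/-- In a finite cyclic group, the number of solutions of `x ^ k = 1` is `gcd k |G|`. -/
lemma card_pow_eq_one_eq_gcd (G : Type*) [Group G] [Fintype G] [IsCyclic G] (k : ℕ) :
    Nat.card {x : G // x ^ k = 1} = Nat.gcd k (Fintype.card G) := by
  classical
  set n := Fintype.card G with hn
  have hn0 : 0 < n := Fintype.card_pos
  set k' := Nat.gcd k n with hk'
  have hk'0 : 0 < k' := Nat.gcd_pos_of_pos_right _ hn0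
  have hset : ∀ x : G, x ^ k = 1 ↔ x ^ k' = 1 := fun x => by
    rw [← orderOf_dvd_iff_pow_eq_one, ← orderOf_dvd_iff_pow_eq_one, hk', Nat.dvd_gcd_iff]
    exact ⟨fun h => ⟨h, orderOf_dvd_card⟩, fun h => h.1⟩
  have hle : Nat.card {x : G // x ^ k = 1} ≤ k' := by
    have := IsCyclic.card_pow_eq_one_le (α := G) (n := k') hk'0
    rw [Nat.card_eq_fintype_card, Fintype.card_subtype]
    calc (Finset.univ.filter (fun x : G => x ^ k = 1)).card
        = (Finset.univ.filter (fun x : G => x ^ k' = 1)).card := by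
          congr 1; apply Finset.filter_congr; intro x _; simp [hset x]
      _ ≤ k' := by convert this using 2
  have hge : k' ≤ Nat.card {x : G // x ^ k = 1} := by
    obtain ⟨g, hg⟩ := IsCyclic.exists_generator (α := G)
    have horder : orderOf g = n := by
      rw [orderOf_eq_card_of_forall_mem_zpowers hg, hn, Nat.card_eq_fintype_card]
    set s := n / k' with hs
    have hsd : s ∣ n := Nat.div_dvd_of_dvd (Nat.gcd_dvd_right _ _)
    have hcard : Fintype.card (Subgroup.zpowers (g ^ s)) = k' := by
      rw [Fintype.card_zpowers, orderOf_pow, horder, Nat.gcd_eq_right hsd,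
        Nat.div_div_self (Nat.gcd_dvd_right _ _) hn0.ne']
    have hmem : ∀ x : Subgroup.zpowers (g ^ s), (x : G) ^ k = 1 := by
      intro x
      have h1 : x ^ k' = 1 := by rw [← hcard]; exact pow_card_eq_one
      obtain ⟨c, hc⟩ := Nat.gcd_dvd_left k n
      rw [hc, pow_mul]
      have : (x : G) ^ k' = 1 := by
        have := congrArg (Subgroup.subtype _) h1
        simpa using this
      rw [this, one_pow]
    rw [Nat.card_eq_fintype_card]
    calc k' = Fintype.card (Subgroup.zpowers (g ^ s)) := hcard.symm
      _ ≤ Fintype.card {x : G // x ^ k = 1} :=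
        Fintype.card_le_of_injective (fun x => ⟨x, hmem x⟩) (by
          intro x y hxy
          simp only [Subtype.mk.injEq] at hxy
          exact Subtype.ext hxy)
  omega

/-- The number of solutions of `x ^ e = x` in a finite field. -/
lemma card_pow_eq_self (F : Type*) [Field F] [Fintype F] (e : ℕ) (he : 1 ≤ e) :
    Nat.card {x : F // x ^ e = x} = Nat.gcd (e - 1) (Fintype.card F - 1) + 1 := by
  classical
  have key : ∀ x : F, x ≠ 0 → (x ^ e = x ↔ x ^ (e - 1) = 1) := by
    intro x hx
    obtain ⟨e', rfl⟩ := Nat.exists_eq_add_of_le he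
    rw [Nat.add_sub_cancel_left, add_comm, pow_succ]
    constructor
    · intro h
      have := mul_right_cancel₀ hx (h.trans (one_mul x).symm)
      exact this
    · intro h; rw [h, one_mul]
  have equ : {u : Fˣ // u ^ (e - 1) = 1} ⊕ PUnit.{1} ≃ {x : F // x ^ e = x} := by
    refine Equiv.ofBijective (fun z => z.elim
      (fun u => ⟨(u.1 : F), by
        have h1 : (u.1 : F) ≠ 0 := Units.ne_zero _
        rw [key _ h1]
        rw [← Units.val_pow_eq_pow_val, u.2, Units.val_one]⟩)
      (fun _ => ⟨0, by rw [zero_pow (by omega)]⟩)) ⟨?_, ?_⟩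
    · rintro (⟨u, hu⟩ | ⟨⟩) (⟨w, hw⟩ | ⟨⟩) h
      · have hv : (u : F) = (w : F) := congrArg Subtype.val h
        exact congrArg Sum.inl (Subtype.ext (Units.ext hv))
      · exact absurd (congrArg Subtype.val h) (Units.ne_zero u)
      · exact absurd (congrArg Subtype.val h).symm (Units.ne_zero w)
      · rfl
    · rintro ⟨x, hx⟩
      by_cases h0 : x = 0
      · exact ⟨Sum.inr PUnit.unit, by simp [h0]⟩
      · refine ⟨Sum.inl ⟨Units.mk0 x h0, ?_⟩, by simp⟩
        ext
        rw [Units.val_pow_eq_pow_val, Units.val_one, Units.val_mk0]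
        exact (key x h0).mp hx
  rw [← Nat.card_congr equ, Nat.card_sum, Nat.card_eq_fintype_card (α := PUnit.{1}),
    Fintype.card_punit, card_pow_eq_one_eq_gcd, Fintype.card_units]

section Geometry

variable {F : Type} [Field F] [Fintype F]

local notation "V" => Fin 3 → F

instance : Finite (Submodule F V) :=
  Finite.of_injective (fun L => (L : Set V)) SetLike.coe_injective

lemma card_V : Fintype.card V = Fintype.card F ^ 3 := by
  simp [Fintype.card_fun]

/-- number of nonzero vectors of a submodule of given rank -/
lemma card_nonzero_of_rank (W : Submodule F V) {r : ℕ} (hW : Module.finrank F W = r) :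
    Nat.card {v : V // v ∈ W ∧ v ≠ 0} = Fintype.card F ^ r - 1 := by
  classical
  have equ : {v : V // v ∈ W ∧ v ≠ 0} ≃ {x : ↥W // ¬ (x = 0)} :=
    { toFun := fun z => ⟨⟨z.1, z.2.1⟩, fun h => z.2.2 (congrArg Subtype.val h)⟩
      invFun := fun x => ⟨x.1.1, ⟨x.1.2, fun h => x.2 (Subtype.ext h)⟩⟩
      left_inv := fun z => rfl
      right_inv := fun x => rfl }
  have hcW : Fintype.card ↥W = Fintype.card F ^ r := by
    have h : Fintype.card ↥W = Fintype.card F ^ Module.finrank F ↥W :=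
      card_eq_pow_finrank (K := F)
    rw [hW] at h; exact h
  rw [Nat.card_congr equ, Nat.card_eq_fintype_card, Fintype.card_subtype_compl,
    Fintype.card_subtype_eq (0 : ↥W), hcW]

/-- members of a line: `v ∈ L ∧ v ≠ 0 ↔ span {v} = L ∧ v ≠ 0` -/
lemma span_eq_line_iff {L : Submodule F V} (hL : Module.finrank F L = 1) {v : V} (hv : v ≠ 0) :
    span F {v} = L ↔ v ∈ L := by
  constructor
  · rintro rfl; exact mem_span_singleton_self v
  · intro h
    refine eq_of_le_of_finrank_le ((span_singleton_le_iff_mem v L).mpr h) ?_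
    rw [hL, finrank_span_singleton hv]

/-- Total number of lines: `X * (Q - 1) = Q^3 - 1`. -/
lemma lines_count_mul :
    Nat.card {L : Submodule F V // Module.finrank F L = 1} * (Fintype.card F - 1) =
      Fintype.card F ^ 3 - 1 := by
  classical
  have htot := fiber_count
      (T := {v : V // v ≠ 0}) (X := {L : Submodule F V // Module.finrank F L = 1})
      (fun v => ⟨span F {v.1}, finrank_span_singleton v.2⟩) (Fintype.card F - 1) (fun L => by
    have equ : {t : {v : V // v ≠ 0} //
          (⟨span F {t.1}, finrank_span_singleton t.2⟩ :
            {L : Submodule F V // Module.finrank F L = 1}) = L} ≃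
        {v : V // v ∈ L.1 ∧ v ≠ 0} :=
      { toFun := fun t => ⟨t.1.1,
          ⟨(span_eq_line_iff L.2 t.1.2).mp (congrArg Subtype.val t.2), t.1.2⟩⟩
        invFun := fun v => ⟨⟨v.1, v.2.2⟩, Subtype.ext ((span_eq_line_iff L.2 v.2.2).mpr v.2.1)⟩
        left_inv := fun t => by ext; rfl
        right_inv := fun v => rfl }
    rw [Nat.card_congr equ, card_nonzero_of_rank L.1 L.2, pow_one])
  have hT : Nat.card {v : V // v ≠ 0} = Fintype.card F ^ 3 - 1 := by
    have equ : {v : V // v ≠ 0} ≃ {v : V // v ∈ (⊤ : Submodule F V) ∧ v ≠ 0} :=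
      Equiv.subtypeEquivRight (by simp)
    rw [Nat.card_congr equ, card_nonzero_of_rank ⊤
      (by rw [finrank_top, Module.finrank_fin_fun])]
  rw [← hT, htot]

lemma lines_count :
    Nat.card {L : Submodule F V // Module.finrank F L = 1} =
      Fintype.card F ^ 2 + Fintype.card F + 1 := by
  have h2 : 2 ≤ Fintype.card F := Fintype.one_lt_card
  obtain ⟨k, hk⟩ : ∃ k, Fintype.card F = k + 1 := ⟨Fintype.card F - 1, by omega⟩
  have hmul := lines_count_mul (F := F)
  refine Nat.eq_of_mul_eq_mul_right (show 0 < Fintype.card F - 1 by omega) ?_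
  rw [hmul, hk]
  have hid : (k + 1) ^ 3 = (((k+1) ^ 2 + (k+1) + 1)) * ((k+1) - 1) + 1 := by
    simp only [Nat.add_sub_cancel]; ring
  rw [hid, Nat.add_sub_cancel]


lemma card_mem_not_mem {M L : Submodule F V} (hLM : L ≤ M) {r s : ℕ}
    (hM : Module.finrank F M = r) (hL : Module.finrank F L = s) :
    Nat.card {v : V // v ∈ M ∧ v ∉ L} = Fintype.card F ^ r - Fintype.card F ^ s := by
  classical
  have equ : {v : V // v ∈ M ∧ v ∉ L} ≃ {x : ↥M // ¬ ((x : V) ∈ L)} :=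
    { toFun := fun z => ⟨⟨z.1, z.2.1⟩, z.2.2⟩
      invFun := fun x => ⟨x.1.1, ⟨x.1.2, x.2⟩⟩
      left_inv := fun z => rfl
      right_inv := fun x => rfl }
  have equ2 : {x : ↥M // (x : V) ∈ L} ≃ ↥L :=
    { toFun := fun x => ⟨x.1.1, x.2⟩
      invFun := fun y => ⟨⟨y.1, hLM y.2⟩, y.2⟩
      left_inv := fun x => rfl
      right_inv := fun y => rfl }
  have hcM : Fintype.card ↥M = Fintype.card F ^ r := by
    have h : Fintype.card ↥M = Fintype.card F ^ Module.finrank F ↥M :=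
      card_eq_pow_finrank (K := F)
    rw [hM] at h; exact h
  have hcL : Fintype.card ↥L = Fintype.card F ^ s := by
    have h : Fintype.card ↥L = Fintype.card F ^ Module.finrank F ↥L :=
      card_eq_pow_finrank (K := F)
    rw [hL] at h; exact h
  rw [Nat.card_congr equ, Nat.card_eq_fintype_card, Fintype.card_subtype_compl,
    hcM, Fintype.card_congr equ2, hcL]

lemma sup_span_rank {L : Submodule F V} (hL : Module.finrank F L = 1)
    {v : V} (hv : v ∉ L) : Module.finrank F ↥(L ⊔ span F {v}) = 2 := by
  have hv0 : v ≠ 0 := fun h => hv (h ▸ L.zero_mem)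
  have hinf : L ⊓ span F {v} = ⊥ := by
    rw [eq_bot_iff]
    intro x hx
    obtain ⟨hxL, hxs⟩ := Submodule.mem_inf.mp hx
    obtain ⟨c, rfl⟩ := mem_span_singleton.mp hxs
    rcases eq_or_ne c 0 with rfl | hc
    · simp
    · exfalso
      apply hv
      have := L.smul_mem c⁻¹ hxL
      rwa [inv_smul_smul₀ hc] at this
  have h := finrank_sup_add_finrank_inf_eq L (span F {v})
  rw [hinf, hL, finrank_span_singleton hv0] at h
  simpa using h

/-- Number of planes containing a given line. -/
lemma planes_over_line (L : Submodule F V) (hL : Module.finrank F L = 1) :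
    Nat.card {M : Submodule F V // Module.finrank F M = 2 ∧ L ≤ M} = Fintype.card F + 1 := by
  classical
  set Q := Fintype.card F with hQdef
  have h2 : 2 ≤ Q := Fintype.one_lt_card
  have htot := fiber_count
      (T := {v : V // v ∉ L}) (X := {M : Submodule F V // Module.finrank F M = 2 ∧ L ≤ M})
      (fun v => ⟨L ⊔ span F {v.1}, ⟨sup_span_rank hL v.2, le_sup_left⟩⟩) (Q ^ 2 - Q) (fun M => by
    have equ : {t : {v : V // v ∉ L} //
          (⟨L ⊔ span F {t.1}, ⟨sup_span_rank hL t.2, le_sup_left⟩⟩ :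
            {M : Submodule F V // Module.finrank F M = 2 ∧ L ≤ M}) = M} ≃
        {v : V // v ∈ M.1 ∧ v ∉ L} :=
      { toFun := fun t => ⟨t.1.1, ⟨by
          have h := congrArg Subtype.val t.2
          rw [← h]
          exact Submodule.mem_sup_right (mem_span_singleton_self _), t.1.2⟩⟩
        invFun := fun v => ⟨⟨v.1, v.2.2⟩, Subtype.ext (eq_of_le_of_finrank_le
          (sup_le M.2.2 ((span_singleton_le_iff_mem _ _).mpr v.2.1))
          (by rw [sup_span_rank hL v.2.2, M.2.1]))⟩
        left_inv := fun t => by ext; rfl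
        right_inv := fun v => rfl }
    rw [Nat.card_congr equ, card_mem_not_mem M.2.2 M.2.1 hL, pow_one])
  have hT : Nat.card {v : V // v ∉ L} = Q ^ 3 - Q := by
    have equ : {v : V // v ∉ L} ≃ {v : V // v ∈ (⊤ : Submodule F V) ∧ v ∉ L} :=
      Equiv.subtypeEquivRight (by simp)
    rw [Nat.card_congr equ,
      card_mem_not_mem le_top (by rw [finrank_top, Module.finrank_fin_fun]) hL, pow_one]
  rw [hT] at htot
  have hle1 : Q ≤ Q ^ 2 := Nat.le_self_pow (by norm_num) Q
  have hle2 : Q ≤ Q ^ 3 := Nat.le_self_pow (by norm_num) Q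
  refine Nat.eq_of_mul_eq_mul_right
    (show 0 < Q ^ 2 - Q by have h3 : Q < Q ^ 2 := by nlinarith
                           omega) ?_
  rw [← htot]
  zify [hle1, hle2]
  ring

/-- Two distinct lines lie on a unique plane. -/
lemma unique_plane (L₁ L₂ : Submodule F V) (h1 : Module.finrank F L₁ = 1)
    (h2 : Module.finrank F L₂ = 1) (hne : L₁ ≠ L₂) :
    Nat.card {M : Submodule F V // Module.finrank F M = 2 ∧ L₁ ≤ M ∧ L₂ ≤ M} = 1 := by
  have hinf : L₁ ⊓ L₂ = ⊥ := by
    rw [eq_bot_iff]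
    intro x hx
    obtain ⟨hx1, hx2⟩ := Submodule.mem_inf.mp hx
    by_contra hx0
    exact hne (((span_eq_line_iff h1 hx0).mpr hx1).symm.trans
      ((span_eq_line_iff h2 hx0).mpr hx2))
  have hrank : Module.finrank F ↥(L₁ ⊔ L₂) = 2 := by
    have h := finrank_sup_add_finrank_inf_eq L₁ L₂
    rw [hinf, h1, h2] at h
    simpa using h
  rw [Nat.card_eq_one_iff_unique]
  constructor
  · constructor
    intro M M'
    have e1 : L₁ ⊔ L₂ = M.1 := eq_of_le_of_finrank_le (sup_le M.2.2.1 M.2.2.2)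
      (by rw [hrank, M.2.1])
    have e2 : L₁ ⊔ L₂ = M'.1 := eq_of_le_of_finrank_le (sup_le M'.2.2.1 M'.2.2.2)
      (by rw [hrank, M'.2.1])
    exact Subtype.ext (e1.symm.trans e2)
  · exact ⟨⟨L₁ ⊔ L₂, ⟨hrank, le_sup_left, le_sup_right⟩⟩⟩

end Geometry

section Frob

variable {F : Type} [Field F] [Fintype F] {p : ℕ} [Fact p.Prime] [CharP F p]

local notation "V" => Fin 3 → F

lemma frobLin_apply (e : ℕ) (v : V) (i : Fin 3) : frobLin F p e 3 v i = v i ^ p ^ e := rfl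

lemma frobLin_injective (e : ℕ) : Function.Injective (frobLin F p e 3) := by
  intro x y h
  funext i
  exact (frobHom F p e).injective (congrFun h i)

lemma frobLin_comp (e e' : ℕ) (v : V) :
    frobLin F p e 3 (frobLin F p e' 3 v) = frobLin F p (e' + e) 3 v := by
  funext i
  show (v i ^ p ^ e') ^ p ^ e = v i ^ p ^ (e' + e)
  rw [← pow_mul, ← pow_add]

lemma frobSub_comp (e e' : ℕ) (L : Submodule F V) :
    frobSub F p e 3 (frobSub F p e' 3 L) = frobSub F p (e' + e) 3 L := by
  unfold frobSub
  ext x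
  simp only [Submodule.mem_map]
  constructor
  · rintro ⟨y, ⟨z, hz, rfl⟩, rfl⟩
    exact ⟨z, hz, (frobLin_comp e e' z).symm⟩
  · rintro ⟨z, hz, rfl⟩
    exact ⟨frobLin F p e' 3 z, ⟨z, hz, rfl⟩, frobLin_comp e e' z⟩

lemma frobSub_full (L : Submodule F V) {N : ℕ} (hN : p ^ N = Fintype.card F) :
    frobSub F p N 3 L = L := by
  have hid : ∀ v : V, frobLin F p N 3 v = v := by
    intro v; funext i
    show v i ^ p ^ N = v i
    rw [hN]; exact FiniteField.pow_card _
  ext x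
  simp only [frobSub, Submodule.mem_map]
  constructor
  · rintro ⟨y, hy, rfl⟩; rwa [hid]
  · intro hx; exact ⟨x, hx, hid x⟩

lemma frobSub_inj (e : ℕ) : Function.Injective (frobSub F p e 3) :=
  Submodule.map_injective_of_injective (frobLin_injective e)

lemma frobSub_mono (e : ℕ) {L L' : Submodule F V} (h : L ≤ L') :
    frobSub F p e 3 L ≤ frobSub F p e 3 L' := Submodule.map_mono h

lemma frobSub_span (e : ℕ) (v : V) :
    frobSub F p e 3 (span F {v}) = span F {frobLin F p e 3 v} := by
  rw [frobSub, Submodule.map_span, Set.image_singleton]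

lemma frobSub_rank_one (e : ℕ) {L : Submodule F V} (hL : Module.finrank F L = 1) :
    Module.finrank F (frobSub F p e 3 L) = 1 := by
  have hbot : L ≠ ⊥ := by
    intro h; rw [h, finrank_bot] at hL; exact one_ne_zero hL.symm
  obtain ⟨v, hvL, hv0⟩ := Submodule.exists_mem_ne_zero_of_ne_bot hbot
  have hspan : span F {v} = L := (span_eq_line_iff hL hv0).mpr hvL
  rw [← hspan, frobSub_span, finrank_span_singleton]
  intro h
  exact hv0 (frobLin_injective e (h.trans (map_zero _).symm))

/-- the inclusion condition flip -/
lemma cond_flip {b c N : ℕ} (hN : p ^ N = Fintype.card F) (hbc : c + b = N)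
    (L M : Submodule F V) :
    L ≤ frobSub F p b 3 M ↔ frobSub F p c 3 L ≤ M := by
  constructor
  · intro h
    have h2 := frobSub_mono (p := p) c h
    rwa [frobSub_comp, show b + c = N by omega, frobSub_full M hN] at h2
  · intro h
    have h2 := frobSub_mono (p := p) b h
    rwa [frobSub_comp, hbc, frobSub_full L hN] at h2


lemma card_ne_and_sub {α : Type*} [Fintype α] [Zero α] (P : α → Prop) (hP0 : P 0) :
    Nat.card {x : α // x ≠ 0 ∧ P x} = Nat.card {x : α // P x} - 1 := by
  classical
  have equ : {x : α // x ≠ 0 ∧ P x} ≃ {z : {x : α // P x} // ¬ (z = ⟨0, hP0⟩)} :=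
    { toFun := fun x => ⟨⟨x.1, x.2.2⟩, fun h => x.2.1 (congrArg Subtype.val h)⟩
      invFun := fun z => ⟨z.1.1, ⟨fun h => z.2 (Subtype.ext h), z.1.2⟩⟩
      left_inv := fun x => rfl
      right_inv := fun z => rfl }
  rw [Nat.card_congr equ, Nat.card_eq_fintype_card, Fintype.card_subtype_compl,
    Fintype.card_subtype_eq, Nat.card_eq_fintype_card]

lemma card_R_eq {F : Type} [Field F] [Fintype F] (E : ℕ) (l x₀ : F) (h0 : x₀ ≠ 0)
    (hx : x₀ ^ E = l * x₀) :
    Nat.card {x : F // x ^ E = l * x} = Nat.card {x : F // x ^ E = x} := by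
  have hl : l ≠ 0 := by
    intro h
    rw [h, zero_mul] at hx
    exact (pow_ne_zero E h0) hx
  have key1 : ∀ y : F, y ^ E = l * y → (y * x₀⁻¹) ^ E = y * x₀⁻¹ := by
    intro y hy
    have : (y * x₀⁻¹) ^ E = (l * y) * (l * x₀)⁻¹ := by rw [mul_pow, hy, inv_pow, hx]
    rw [this]
    field_simp
  have key2 : ∀ z : F, z ^ E = z → (z * x₀) ^ E = l * (z * x₀) := by
    intro z hz
    rw [mul_pow, hz, hx]
    ring
  refine Nat.card_congr
    { toFun := fun y => ⟨y.1 * x₀⁻¹, key1 y.1 y.2⟩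
      invFun := fun z => ⟨z.1 * x₀, key2 z.1 z.2⟩
      left_inv := fun y => Subtype.ext (by field_simp)
      right_inv := fun z => Subtype.ext (by field_simp) }

/-- Number of lines fixed by the `p^d`-Frobenius, times `(m₀-1)`, where
`m₀` is the number of solutions of `x^(p^d) = x`. -/
lemma fixed_lines_count (d : ℕ) (m₀ : ℕ) (hm : Nat.card {x : F // x ^ p ^ d = x} = m₀) :
    Nat.card {L : Submodule F V // Module.finrank F L = 1 ∧ frobSub F p d 3 L = L} * (m₀ - 1) =
      m₀ ^ 3 - 1 := by
  classical
  set Q := Fintype.card F with hQdef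
  have h2 : 2 ≤ Q := Fintype.one_lt_card
  have hE0 : p ^ d ≠ 0 := pow_ne_zero d (Fact.out : p.Prime).ne_zero
  -- Step A: vectors spanning fixed lines, fibered over fixed lines
  have hA := fiber_count
    (T := {v : V // v ≠ 0 ∧ frobLin F p d 3 v ∈ span F {v}}) (X := {L : Submodule F V // Module.finrank F L = 1 ∧ frobSub F p d 3 L = L})
    (fun t => ⟨span F {t.1}, ⟨finrank_span_singleton t.2.1, by
      obtain ⟨a, ha⟩ := mem_span_singleton.mp t.2.2
      have ha0 : a ≠ 0 := by
        intro h
        rw [h, zero_smul] at ha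
        exact t.2.1 (frobLin_injective d (ha.symm.trans (map_zero _).symm))
      rw [frobSub_span, ← ha]
      exact span_singleton_smul_eq (IsUnit.mk0 a ha0) _⟩⟩)
    (Q - 1) (fun L => by
      have equ : {t : {v : V // v ≠ 0 ∧ frobLin F p d 3 v ∈ span F {v}} //
            (⟨span F {t.1}, by
              obtain ⟨a, ha⟩ := mem_span_singleton.mp t.2.2
              have ha0 : a ≠ 0 := by
                intro h
                rw [h, zero_smul] at ha
                exact t.2.1 (frobLin_injective d (ha.symm.trans (map_zero _).symm))
              exact ⟨finrank_span_singleton t.2.1, by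
                rw [frobSub_span, ← ha]
                exact span_singleton_smul_eq (IsUnit.mk0 a ha0) _⟩⟩ : {L : Submodule F V // Module.finrank F L = 1 ∧ frobSub F p d 3 L = L}) = L} ≃
          {v : V // v ∈ L.1 ∧ v ≠ 0} :=
        { toFun := fun t => ⟨t.1.1,
            ⟨(span_eq_line_iff L.2.1 t.1.2.1).mp (congrArg Subtype.val t.2), t.1.2.1⟩⟩
          invFun := fun v => ⟨⟨v.1, ⟨v.2.2, by
              have hs : span F {v.1} = L.1 := (span_eq_line_iff L.2.1 v.2.2).mpr v.2.1
              rw [hs]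
              have hmem : frobLin F p d 3 v.1 ∈ frobSub F p d 3 L.1 :=
                Submodule.mem_map_of_mem v.2.1
              rwa [L.2.2] at hmem⟩⟩,
            Subtype.ext ((span_eq_line_iff L.2.1 v.2.2).mpr v.2.1)⟩
          left_inv := fun t => by ext; rfl
          right_inv := fun v => rfl }
      exact (Nat.card_congr equ).trans (by rw [card_nonzero_of_rank L.1 L.2.1, pow_one]))
  -- Step B1: nonzero scalars fibered over eigenvalue classes
  have hcard_ne : Nat.card {x : F // ¬ (x = 0)} = Q - 1 := by
    rw [Nat.card_eq_fintype_card, Fintype.card_subtype_compl, Fintype.card_subtype_eq]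
  have hB1 := fiber_count
    (T := {x : F // ¬ (x = 0)}) (X := {l : F // ∃ x : F, x ≠ 0 ∧ x ^ p ^ d = l * x})
    (fun x => ⟨x.1 ^ p ^ d * x.1⁻¹, ⟨x.1, x.2, by field_simp [x.2]⟩⟩) (m₀ - 1) (fun l => by
      obtain ⟨x₀, h0, hx⟩ := l.2
      have equ : {t : {x : F // ¬ (x = 0)} //
            (⟨t.1 ^ p ^ d * t.1⁻¹, ⟨t.1, t.2, by field_simp [t.2]⟩⟩ : {l : F // ∃ x : F, x ≠ 0 ∧ x ^ p ^ d = l * x}) = l} ≃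
          {x : F // x ≠ 0 ∧ x ^ p ^ d = l.1 * x} :=
        { toFun := fun t => ⟨t.1.1, ⟨t.1.2, by
            have h := congrArg Subtype.val t.2
            simp only at h
            rw [← h]
            field_simp [t.1.2]⟩⟩
          invFun := fun x => ⟨⟨x.1, x.2.1⟩, Subtype.ext (by
            simp only
            rw [x.2.2]
            field_simp [x.2.1])⟩
          left_inv := fun t => by ext; rfl
          right_inv := fun x => rfl }
      exact (Nat.card_congr equ).trans (by
        rw [card_ne_and_sub (fun x : F => x ^ p ^ d = l.1 * x) (by simp [zero_pow hE0]),
          card_R_eq (p ^ d) l.1 x₀ h0 hx, hm]))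
  rw [hcard_ne] at hB1
  -- Step B2: the same vector set fibered over eigenvalue classes
  have hlam : ∀ t : {v : V // v ≠ 0 ∧ frobLin F p d 3 v ∈ span F {v}}, ∃ lam : F, frobLin F p d 3 t.1 = lam • t.1 := by
    intro t
    obtain ⟨a, ha⟩ := mem_span_singleton.mp t.2.2
    exact ⟨a, ha.symm⟩
  choose lam hlamspec using hlam
  have hlamw : ∀ t : {v : V // v ≠ 0 ∧ frobLin F p d 3 v ∈ span F {v}}, ∃ x : F, x ≠ 0 ∧ x ^ p ^ d = lam t * x := by
    intro t
    obtain ⟨i, hi⟩ := Function.ne_iff.mp t.2.1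
    refine ⟨t.1 i, hi, ?_⟩
    have h := congrFun (hlamspec t) i
    simpa [frobLin_apply] using h
  have hlam_eq : ∀ (t : {v : V // v ≠ 0 ∧ frobLin F p d 3 v ∈ span F {v}}) (a : F),
      frobLin F p d 3 t.1 = a • t.1 → lam t = a := by
    intro t a ha
    obtain ⟨i, hi⟩ := Function.ne_iff.mp t.2.1
    have h1 := congrFun (hlamspec t) i
    have h2 := congrFun ha i
    simp only [Pi.smul_apply, smul_eq_mul] at h1 h2
    exact mul_right_cancel₀ hi (h1.symm.trans h2)
  have hB2 := fiber_count (T := {v : V // v ≠ 0 ∧ frobLin F p d 3 v ∈ span F {v}}) (X := {l : F // ∃ x : F, x ≠ 0 ∧ x ^ p ^ d = l * x})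
    (fun t => ⟨lam t, hlamw t⟩) (m₀ ^ 3 - 1) (fun l => by
      have hR0 : (0 : F) ^ p ^ d = l.1 * 0 := by simp [zero_pow hE0]
      have equ : {t : {v : V // v ≠ 0 ∧ frobLin F p d 3 v ∈ span F {v}} // (⟨lam t, hlamw t⟩ : {l : F // ∃ x : F, x ≠ 0 ∧ x ^ p ^ d = l * x}) = l} ≃
          {w : Fin 3 → {x : F // x ^ p ^ d = l.1 * x} //
            ¬ (w = fun _ => ⟨0, hR0⟩)} :=
        { toFun := fun t => ⟨fun i => ⟨t.1.1 i, by
              have hl : lam t.1 = l.1 := congrArg Subtype.val t.2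
              have h := congrFun (hlamspec t.1) i
              rw [hl] at h
              simpa [frobLin_apply] using h⟩, by
            intro h
            apply t.1.2.1
            funext i
            exact congrArg Subtype.val (congrFun h i)⟩
          invFun := fun w => ⟨⟨fun i => (w.1 i).1, ⟨by
              intro h
              apply w.2
              funext i
              exact Subtype.ext (congrFun h i), by
              apply mem_span_singleton.mpr
              refine ⟨l.1, ?_⟩
              funext i
              exact ((w.1 i).2).symm⟩⟩, by
            refine Subtype.ext (hlam_eq _ l.1 ?_)
            funext i
            simp only [frobLin_apply, Pi.smul_apply, smul_eq_mul]
            exact (w.1 i).2⟩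
          left_inv := fun t => by ext; rfl
          right_inv := fun w => by ext; rfl }
      refine (Nat.card_congr equ).trans ?_
      rw [Nat.card_eq_fintype_card, Fintype.card_subtype_compl,
        Fintype.card_subtype_eq]
      have hcR : Fintype.card {x : F // x ^ p ^ d = l.1 * x} = m₀ := by
        obtain ⟨x₀, h0, hx⟩ := l.2
        rw [← Nat.card_eq_fintype_card, card_R_eq (p ^ d) l.1 x₀ h0 hx, hm]
      rw [Fintype.card_fun, hcR]
      simp)
  -- combine
  refine Nat.eq_of_mul_eq_mul_right (show 0 < Q - 1 by omega) ?_
  calc Nat.card {L : Submodule F V // Module.finrank F L = 1 ∧ frobSub F p d 3 L = L} * (m₀ - 1) * (Q - 1)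
      = Nat.card {L : Submodule F V // Module.finrank F L = 1 ∧ frobSub F p d 3 L = L} * (Q - 1) * (m₀ - 1) := by ring
    _ = Nat.card {l : F // ∃ x : F, x ≠ 0 ∧ x ^ p ^ d = l * x} * (m₀ ^ 3 - 1) * (m₀ - 1) := by rw [← hA, hB2]
    _ = (Nat.card {l : F // ∃ x : F, x ≠ 0 ∧ x ^ p ^ d = l * x} * (m₀ - 1)) * (m₀ ^ 3 - 1) := by ring
    _ = (Q - 1) * (m₀ ^ 3 - 1) := by rw [← hB1]
    _ = (m₀ ^ 3 - 1) * (Q - 1) := by ring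

end Frob


lemma cube_cancel {X m : ℕ} (h2 : 2 ≤ m) (h : X * (m - 1) = m ^ 3 - 1) :
    X = m ^ 2 + m + 1 := by
  obtain ⟨k, hk⟩ : ∃ k, m = k + 1 := ⟨m - 1, by omega⟩
  refine Nat.eq_of_mul_eq_mul_right (show 0 < m - 1 by omega) ?_
  rw [h, hk]
  have hid : (k + 1) ^ 3 = (((k + 1) ^ 2 + (k + 1) + 1)) * ((k + 1) - 1) + 1 := by
    simp only [Nat.add_sub_cancel]; ring
  rw [hid, Nat.add_sub_cancel]

/-- **Introductory surface count (`n = 3`).**  With `q = rs = p^{a+b}`, the number of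
pairs `(L,M)` of `F_{q^ν}`-subspaces of `F_{q^ν}^3` with `dim L = 1`, `dim M = 2`,
`L^r ⊆ M` and `L ⊆ M^s` equals `q^{2ν} + (q² + q + 2)·q^ν + 1`. -/
theorem surface_point_count
    (p : ℕ) [Fact p.Prime] (a b : ℕ) (hab : a ≠ 0 ∨ b ≠ 0) (ν : ℕ) (hν : 0 < ν)
    (F : Type) [Field F] [Fintype F] [CharP F p]
    (hF : Fintype.card F = (p ^ (a + b)) ^ ν) :
    (Nat.card {LM : Submodule F (Fin 3 → F) × Submodule F (Fin 3 → F) //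
        Module.finrank F ↥LM.1 = 1 ∧ Module.finrank F ↥LM.2 = 2 ∧
        frobSub F p a 3 LM.1 ≤ LM.2 ∧ LM.1 ≤ frobSub F p b 3 LM.2} : ℤ) =
      (((p : ℤ) ^ (a + b)) ^ ν) ^ 2 +
        ((((p : ℤ) ^ (a + b)) ^ 2 + (p : ℤ) ^ (a + b) + 2) * ((p : ℤ) ^ (a + b)) ^ ν + 1) := by
  classical
  have hp2 : 2 ≤ p := (Fact.out : p.Prime).two_le
  have hab1 : 1 ≤ a + b := by omega
  obtain ⟨ν', rfl⟩ : ∃ ν', ν = ν' + 1 := ⟨ν - 1, by omega⟩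
  set q := p ^ (a + b) with hq
  have hq2 : 2 ≤ q := by
    calc 2 = 2 ^ 1 := by norm_num
    _ ≤ p ^ (a + b) := Nat.pow_le_pow_left hp2 1 |>.trans (Nat.pow_le_pow_right (by omega) hab1)
  have hQ2 : 2 ≤ Fintype.card F := Fintype.one_lt_card
  set N := (a + b) * (ν' + 1) with hN
  have hpN : p ^ N = Fintype.card F := by
    rw [hN, pow_mul, ← hq]
    exact hF.symm
  set d := (a + b) * ν' with hd
  set c := a + (a + b) * ν' with hc
  have hcb : c + b = N := by rw [hc, hN]; ring
  have hda : d + a = c := by omega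
  -- the eigenvalue-fixed-point count
  have hm : Nat.card {x : F // x ^ p ^ d = x} = q := by
    rw [card_pow_eq_self F (p ^ d) (Nat.one_le_pow _ _ (by omega))]
    have hgcd := gcd_pow_sub_one_aux p (a + b) ν' (by omega)
    have hexp : (a + b) * ν' + (a + b) = N := by rw [hN]; ring
    rw [← hd, hexp] at hgcd
    rw [← hpN, hgcd]
    omega
  have hFx : Nat.card {L : Submodule F (Fin 3 → F) //
      Module.finrank F L = 1 ∧ frobSub F p d 3 L = L} = q ^ 2 + q + 1 :=
    cube_cancel hq2 (fixed_lines_count d q hm)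
  -- restructure the pair count as a sigma type
  have equS : {LM : Submodule F (Fin 3 → F) × Submodule F (Fin 3 → F) //
        Module.finrank F ↥LM.1 = 1 ∧ Module.finrank F ↥LM.2 = 2 ∧
        frobSub F p a 3 LM.1 ≤ LM.2 ∧ LM.1 ≤ frobSub F p b 3 LM.2} ≃
      Σ L : {L : Submodule F (Fin 3 → F) // Module.finrank F L = 1},
        {M : Submodule F (Fin 3 → F) // Module.finrank F M = 2 ∧
          frobSub F p a 3 L.1 ≤ M ∧ frobSub F p c 3 L.1 ≤ M} :=
    { toFun := fun s => ⟨⟨s.1.1, s.2.1⟩, ⟨s.1.2, ⟨s.2.2.1, s.2.2.2.1,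
        (cond_flip hpN hcb s.1.1 s.1.2).mp s.2.2.2.2⟩⟩⟩
      invFun := fun z => ⟨(z.1.1, z.2.1), ⟨z.1.2, z.2.2.1, z.2.2.2.1,
        (cond_flip hpN hcb z.1.1 z.2.1).mpr z.2.2.2.2⟩⟩
      left_inv := fun s => rfl
      right_inv := fun z => rfl }
  haveI instL : Fintype {L : Submodule F (Fin 3 → F) // Module.finrank F L = 1} :=
    Fintype.ofFinite _
  haveI instM : ∀ L : {L : Submodule F (Fin 3 → F) // Module.finrank F L = 1},
      Fintype {M : Submodule F (Fin 3 → F) // Module.finrank F M = 2 ∧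
        frobSub F p a 3 L.1 ≤ M ∧ frobSub F p c 3 L.1 ≤ M} := fun L => Fintype.ofFinite _
  -- the per-line count
  have hcnt : ∀ L : {L : Submodule F (Fin 3 → F) // Module.finrank F L = 1},
      Nat.card {M : Submodule F (Fin 3 → F) // Module.finrank F M = 2 ∧
        frobSub F p a 3 L.1 ≤ M ∧ frobSub F p c 3 L.1 ≤ M} =
      if frobSub F p d 3 L.1 = L.1 then Fintype.card F + 1 else 1 := by
    intro L
    by_cases hfix : frobSub F p d 3 L.1 = L.1
    · rw [if_pos hfix]
      have heq : frobSub F p c 3 L.1 = frobSub F p a 3 L.1 := by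
        have h := frobSub_comp (p := p) a d L.1
        rw [hfix, hda] at h
        exact h.symm
      have equ : {M : Submodule F (Fin 3 → F) // Module.finrank F M = 2 ∧
            frobSub F p a 3 L.1 ≤ M ∧ frobSub F p c 3 L.1 ≤ M} ≃
          {M : Submodule F (Fin 3 → F) // Module.finrank F M = 2 ∧ frobSub F p a 3 L.1 ≤ M} :=
        Equiv.subtypeEquivRight (fun M => by rw [heq]; tauto)
      rw [Nat.card_congr equ]
      exact planes_over_line _ (frobSub_rank_one a L.2)
    · rw [if_neg hfix]
      have hne : frobSub F p a 3 L.1 ≠ frobSub F p c 3 L.1 := by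
        intro h
        apply hfix
        apply frobSub_inj (p := p) a
        rw [frobSub_comp (p := p) a d L.1, hda]
        exact h.symm
      exact unique_plane _ _ (frobSub_rank_one a L.2) (frobSub_rank_one c L.2) hne
  -- summation
  have hS : Nat.card {LM : Submodule F (Fin 3 → F) × Submodule F (Fin 3 → F) //
        Module.finrank F ↥LM.1 = 1 ∧ Module.finrank F ↥LM.2 = 2 ∧
        frobSub F p a 3 LM.1 ≤ LM.2 ∧ LM.1 ≤ frobSub F p b 3 LM.2} =
      ∑ L : {L : Submodule F (Fin 3 → F) // Module.finrank F L = 1},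
        (if frobSub F p d 3 L.1 = L.1 then Fintype.card F + 1 else 1) := by
    rw [Nat.card_congr equS, Nat.card_eq_fintype_card, Fintype.card_sigma]
    exact Finset.sum_congr rfl fun L _ => (Nat.card_eq_fintype_card (α := _)).symm.trans (hcnt L)
  have hfilter : (Finset.univ.filter (fun L : {L : Submodule F (Fin 3 → F) //
        Module.finrank F L = 1} => frobSub F p d 3 L.1 = L.1)).card = q ^ 2 + q + 1 := by
    rw [← Fintype.card_subtype, ← Nat.card_eq_fintype_card,
      Nat.card_congr (Equiv.subtypeSubtypeEquivSubtypeInter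
        (fun L : Submodule F (Fin 3 → F) => Module.finrank F L = 1)
        (fun L => frobSub F p d 3 L = L))]
    exact hFx
  have hlines : Fintype.card {L : Submodule F (Fin 3 → F) // Module.finrank F L = 1} =
      Fintype.card F ^ 2 + Fintype.card F + 1 := by
    rw [← Nat.card_eq_fintype_card]
    exact lines_count
  have hsum : ∑ L : {L : Submodule F (Fin 3 → F) // Module.finrank F L = 1},
        (if frobSub F p d 3 L.1 = L.1 then Fintype.card F + 1 else 1) =
      (q ^ 2 + q + 1) * (Fintype.card F + 1) +
        ((Fintype.card F ^ 2 + Fintype.card F + 1) - (q ^ 2 + q + 1)) := by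
    rw [Finset.sum_ite, Finset.sum_const, Finset.sum_const, smul_eq_mul, smul_eq_mul,
      hfilter, mul_one]
    congr 1
    have hneg := Finset.card_filter_add_card_filter_not
      (s := (Finset.univ : Finset {L : Submodule F (Fin 3 → F) // Module.finrank F L = 1}))
      (fun L => frobSub F p d 3 L.1 = L.1)
    rw [hfilter, Finset.card_univ, hlines] at hneg
    omega
  have hqQ : q ≤ Fintype.card F := by
    rw [hF]
    calc q = q ^ 1 := (pow_one q).symm
    _ ≤ q ^ (ν' + 1) := Nat.pow_le_pow_right (by omega) (by omega)
  have hle : q ^ 2 + q + 1 ≤ Fintype.card F ^ 2 + Fintype.card F + 1 := by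
    have := Nat.pow_le_pow_left hqQ 2
    omega
  rw [hS, hsum]
  have hcast : ((Fintype.card F : ℤ)) = ((p : ℤ) ^ (a + b)) ^ (ν' + 1) := by
    rw [hF, hq]
    push_cast
    ring
  have hqc : ((q : ℤ)) = (p : ℤ) ^ (a + b) := by rw [hq]; push_cast; ring
  rw [Nat.cast_add, Nat.cast_sub hle]
  push_cast
  rw [hcast, hqc]
  ring
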